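/- Let K be a field and let I ⊂ K[x,y] be a lexsegment ideal. Then μ(I^2) = 2μ(I) − 1. -/

import Mathlib

open MvPolynomial

/-- The minimal number of generators of an ideal. -/
noncomputable def mu {R : Type*} [CommRing R] (I : Ideal R) : ℕ :=
  sInf {m : ℕ | ∃ s : Finset R, s.card = m ∧ Ideal.span (s : Set R) = I}

/-- A monomial ideal: an ideal generated by monomials. -/
def IsMonomialIdeal {K : Type*} [Field K] {n : ℕ} (I : Ideal (MvPolynomial (Fin n) K)) : Prop :=
  ∃ S : Set (Fin n →₀ ℕ), I = Ideal.span ((fun v => monomial v (1 : K)) '' S)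

/-- A lexsegment ideal of `K[x,y]`: a monomial ideal such that for every monomial
`x^c y^d ∈ I` and every monomial `x^e y^f` of the same degree which is larger in the
lexicographic order with `x > y` (i.e. `e > c`), also `x^e y^f ∈ I`. -/
def IsLexsegmentIdeal {K : Type*} [Field K] (I : Ideal (MvPolynomial (Fin 2) K)) : Prop :=
  IsMonomialIdeal I ∧ ∀ c d e f : ℕ, c + d = e + f → c < e →
    (X 0 : MvPolynomial (Fin 2) K) ^ c * X 1 ^ d ∈ I →
    (X 0 : MvPolynomial (Fin 2) K) ^ e * X 1 ^ f ∈ I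

open Pointwise

namespace LexAux

noncomputable def ee (a b : ℕ) : Fin 2 →₀ ℕ := Finsupp.single 0 a + Finsupp.single 1 b

@[simp] lemma ee_apply0 (a b : ℕ) : ee a b 0 = a := by
  simp [ee, Finsupp.single_apply]

@[simp] lemma ee_apply1 (a b : ℕ) : ee a b 1 = b := by
  simp [ee, Finsupp.single_apply]

lemma ee_eq (v : Fin 2 →₀ ℕ) : ee (v 0) (v 1) = v := by
  ext i
  fin_cases i
  · simp
  · simp

lemma ee_le_iff {a b c d : ℕ} : ee a b ≤ ee c d ↔ a ≤ c ∧ b ≤ d := by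
  constructor
  · intro h
    exact ⟨by simpa using Finsupp.le_def.mp h 0, by simpa using Finsupp.le_def.mp h 1⟩
  · rintro ⟨h1, h2⟩
    rw [Finsupp.le_def]
    intro i
    fin_cases i
    · simpa using h1
    · simpa using h2

lemma ee_add (a b c d : ℕ) : ee a b + ee c d = ee (a + c) (b + d) := by
  ext i
  fin_cases i
  · simp
  · simp

lemma monX_eq {K : Type*} [Field K] (a b : ℕ) :
    (X 0 : MvPolynomial (Fin 2) K) ^ a * X 1 ^ b = monomial (ee a b) 1 := by
  rw [X_pow_eq_monomial, X_pow_eq_monomial, monomial_mul, one_mul]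
  rfl

variable {K : Type*} [Field K]

lemma monomial_mem_mono {J : Ideal (MvPolynomial (Fin 2) K)} {u w : Fin 2 →₀ ℕ}
    (h : monomial u (1 : K) ∈ J) (huw : u ≤ w) : monomial w (1 : K) ∈ J := by
  obtain ⟨t, rfl⟩ := le_iff_exists_add.mp huw
  have : monomial (u + t) (1 : K) = monomial t 1 * monomial u 1 := by
    rw [monomial_mul, one_mul, add_comm]
  rw [this]
  exact Ideal.mul_mem_left _ _ h

lemma monomial_mem_iff {S : Set (Fin 2 →₀ ℕ)} {w : Fin 2 →₀ ℕ} :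
    monomial w (1 : K) ∈ Ideal.span ((fun v => monomial v (1 : K)) '' S) ↔ ∃ s ∈ S, s ≤ w := by
  rw [mem_ideal_span_monomial_image]
  simp [support_monomial]

lemma mem_of_support {S : Set (Fin 2 →₀ ℕ)} {J : Ideal (MvPolynomial (Fin 2) K)}
    (hJ : J = Ideal.span ((fun v => monomial v (1 : K)) '' S))
    {f : MvPolynomial (Fin 2) K} (hf : f ∈ J) {w : Fin 2 →₀ ℕ} (hw : w ∈ f.support) :
    monomial w (1 : K) ∈ J := by
  rw [hJ] at hf ⊢
  obtain ⟨si, hsi, hle⟩ := mem_ideal_span_monomial_image.mp hf w hw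
  exact monomial_mem_mono (monomial_mem_iff.mpr ⟨si, hsi, le_rfl⟩) hle


lemma card_le_mu {S : Set (Fin 2 →₀ ℕ)} {J : Ideal (MvPolynomial (Fin 2) K)}
    (hJ : J = Ideal.span ((fun v => monomial v (1 : K)) '' S))
    (G : Finset (Fin 2 →₀ ℕ))
    (hGJ : ∀ g ∈ G, monomial g (1 : K) ∈ J)
    (hmin : ∀ g ∈ G, ∀ w : Fin 2 →₀ ℕ, monomial w (1 : K) ∈ J → w ≤ g → w = g) :
    G.card ≤ mu J := by
  classical
  have hfg : {m : ℕ | ∃ s : Finset (MvPolynomial (Fin 2) K),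
      s.card = m ∧ Ideal.span (s : Set (MvPolynomial (Fin 2) K)) = J}.Nonempty := by
    obtain ⟨s, hs⟩ := IsNoetherian.noetherian J
    exact ⟨s.card, s, rfl, hs⟩
  refine le_csInf hfg ?_
  rintro m ⟨s, rfl, hspan⟩
  let T : MvPolynomial (Fin 2) K →ₗ[K] (↥G → K) :=
    { toFun := fun f g => coeff g.1 f
      map_add' := by intro f g; funext j; simp [coeff_add]
      map_smul' := by intro c f; funext j; simp [coeff_smul] }
  have hsub : (s : Set (MvPolynomial (Fin 2) K)) ⊆ (J : Set (MvPolynomial (Fin 2) K)) := by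
    rw [← hspan]; exact Ideal.subset_span
  have key : ∀ p f : MvPolynomial (Fin 2) K, f ∈ J → T (p * f) = coeff 0 p • T f := by
    intro p f hf
    funext g
    show coeff g.1 (p * f) = coeff 0 p • coeff g.1 f
    rw [coeff_mul, Finset.sum_eq_single ((0 : Fin 2 →₀ ℕ), g.1)]
    · simp
    · rintro ⟨u, v⟩ huv hneq
      rw [Finset.HasAntidiagonal.mem_antidiagonal] at huv
      have huv' : u + v = g.1 := huv
      have hu : u ≠ 0 := by
        rintro rfl
        rw [zero_add] at huv'
        exact hneq (by rw [huv'])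
      have hvg : v ≠ g.1 := by
        intro h
        apply hu
        rw [h] at huv'
        have h2 : u + g.1 = 0 + g.1 := by rw [zero_add]; exact huv'
        exact add_right_cancel h2
      have hvle : v ≤ g.1 := huv' ▸ le_add_self
      have hcv : coeff v f = 0 := by
        by_contra hc
        have hvs : v ∈ f.support := mem_support_iff.mpr hc
        exact hvg (hmin g.1 g.2 v (mem_of_support hJ hf hvs) hvle)
      rw [hcv, mul_zero]
    · intro h
      exact absurd (Finset.HasAntidiagonal.mem_antidiagonal.mpr (zero_add g.1)) h
  have hTmem : ∀ f ∈ J, T f ∈ Submodule.span K ((fun f => T f) '' (s : Set (MvPolynomial (Fin 2) K))) := by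
    intro f hf
    have hf' : f ∈ Submodule.span (MvPolynomial (Fin 2) K) (s : Set (MvPolynomial (Fin 2) K)) := by
      rw [show Submodule.span (MvPolynomial (Fin 2) K) (s : Set (MvPolynomial (Fin 2) K)) = J from hspan]
      exact hf
    obtain ⟨c, hc, hsum⟩ := Submodule.mem_span_set.mp hf'
    rw [← hsum, Finsupp.sum, map_sum]
    apply Submodule.sum_mem
    intro σ hσ
    have hσs : σ ∈ (s : Set (MvPolynomial (Fin 2) K)) := hc hσ
    rw [smul_eq_mul, key _ _ (hsub hσs)]
    exact Submodule.smul_mem _ _ (Submodule.subset_span ⟨σ, hσs, rfl⟩)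
  have hdelta : ∀ g : ↥G, T (monomial g.1 1) = Pi.single g 1 := by
    intro g
    funext j
    simp only [T, LinearMap.coe_mk, AddHom.coe_mk]
    rcases eq_or_ne j g with h | h
    · subst h; simp [coeff_monomial]
    · rw [coeff_monomial, Pi.single_apply, if_neg h,
        if_neg (fun hh => h (Subtype.ext hh.symm))]
  have htop : Submodule.span K ((fun f => T f) '' (s : Set (MvPolynomial (Fin 2) K))) = ⊤ := by
    rw [eq_top_iff]
    intro v _
    have hv : v = ∑ g : ↥G, v g • (Pi.single g 1 : ↥G → K) := by
      funext j
      rw [Finset.sum_apply]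
      simp [Pi.single_apply, mul_ite, Pi.smul_apply]
    rw [hv]
    refine Submodule.sum_mem _ fun g _ => Submodule.smul_mem _ _ ?_
    exact hdelta g ▸ hTmem _ (hGJ g.1 g.2)
  have h1 : G.card = Module.finrank K (↥G → K) := by
    rw [Module.finrank_fintype_fun_eq_card, Fintype.card_coe]
  have h2 : Module.finrank K (↥G → K) ≤ (s.image (fun f => T f)).card := by
    have h3 := finrank_span_finset_le_card (R := K) (s.image (fun f => T f))
    rw [Set.finrank, Finset.coe_image, htop, finrank_top] at h3
    exact h3
  calc G.card = Module.finrank K (↥G → K) := h1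
    _ ≤ (s.image (fun f => T f)).card := h2
    _ ≤ s.card := Finset.card_image_le

lemma mu_le_card {J : Ideal (MvPolynomial (Fin 2) K)} (G : Finset (Fin 2 →₀ ℕ))
    (h : Ideal.span ((fun v => monomial v (1 : K)) '' (G : Set (Fin 2 →₀ ℕ))) = J) :
    mu J ≤ G.card := by
  classical
  apply Nat.sInf_le
  refine ⟨G.image (fun v => monomial v (1 : K)), ?_, ?_⟩
  · exact Finset.card_image_of_injective _ (monomial_left_injective one_ne_zero)
  · rw [Finset.coe_image]; exact h

lemma slide {J : Ideal (MvPolynomial (Fin 2) K)}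
    (hstep : ∀ a b : ℕ, monomial (ee a (b + 1)) (1 : K) ∈ J →
      monomial (ee (a + 1) b) (1 : K) ∈ J) :
    ∀ b a : ℕ, monomial (ee a b) (1 : K) ∈ J → monomial (ee (a + b) 0) (1 : K) ∈ J := by
  intro b
  induction b with
  | zero => intro a h; simpa using h
  | succ n ih =>
    intro a h
    have h1 := hstep a n h
    have h2 := ih (a + 1) h1
    rwa [show a + 1 + n = a + (n + 1) by omega] at h2

lemma up {J : Ideal (MvPolynomial (Fin 2) K)} {a b : ℕ} (c d : ℕ)
    (h : monomial (ee a b) (1 : K) ∈ J) (hac : a ≤ c) (hbd : b ≤ d) :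
    monomial (ee c d) (1 : K) ∈ J :=
  monomial_mem_mono h (ee_le_iff.mpr ⟨hac, hbd⟩)

lemma mu_staircase {S : Set (Fin 2 →₀ ℕ)} {J : Ideal (MvPolynomial (Fin 2) K)}
    (hJ : J = Ideal.span ((fun v => monomial v (1 : K)) '' S))
    (hstep : ∀ a b : ℕ, monomial (ee a (b + 1)) (1 : K) ∈ J →
      monomial (ee (a + 1) b) (1 : K) ∈ J)
    (hne : ∃ a b : ℕ, monomial (ee a b) (1 : K) ∈ J) :
    mu J = sInf {n : ℕ | monomial (ee n 0) (1 : K) ∈ J}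
        - sInf {a : ℕ | ∃ b : ℕ, monomial (ee a b) (1 : K) ∈ J} + 1 := by
  classical
  obtain ⟨a0, b0, hP0⟩ := hne
  have hAne : ∃ n, n ∈ {n : ℕ | monomial (ee n 0) (1 : K) ∈ J} :=
    ⟨a0 + b0, slide hstep b0 a0 hP0⟩
  set A := sInf {n : ℕ | monomial (ee n 0) (1 : K) ∈ J} with hAdef
  have hA : monomial (ee A 0) (1 : K) ∈ J := Nat.sInf_mem hAne
  have hA_min : ∀ n : ℕ, monomial (ee n 0) (1 : K) ∈ J → A ≤ n := fun n h => Nat.sInf_le h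
  have hkne : ∃ a, a ∈ {a : ℕ | ∃ b : ℕ, monomial (ee a b) (1 : K) ∈ J} := ⟨a0, b0, hP0⟩
  set k := sInf {a : ℕ | ∃ b : ℕ, monomial (ee a b) (1 : K) ∈ J} with hkdef
  obtain ⟨bk, hbk⟩ := Nat.sInf_mem hkne
  have hk_min : ∀ a b : ℕ, monomial (ee a b) (1 : K) ∈ J → k ≤ a :=
    fun a b h => Nat.sInf_le ⟨b, h⟩
  have hkA : k ≤ A := hk_min A 0 hA
  set b' : ℕ → ℕ := fun j => sInf {b : ℕ | monomial (ee (k + j) b) (1 : K) ∈ J} with hb'def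
  have hb'mem : ∀ j : ℕ, monomial (ee (k + j) (b' j)) (1 : K) ∈ J := by
    intro j
    simp only [hb'def]
    have hx : bk ∈ {b : ℕ | monomial (ee (k + j) b) (1 : K) ∈ J} :=
      up (k + j) bk hbk (Nat.le_add_right _ _) le_rfl
    exact Nat.sInf_mem ⟨bk, hx⟩
  have hb'min : ∀ j b : ℕ, monomial (ee (k + j) b) (1 : K) ∈ J → b' j ≤ b := by
    intro j b h
    simp only [hb'def]
    exact Nat.sInf_le h
  have hchar : ∀ a b : ℕ, monomial (ee a b) (1 : K) ∈ J ↔ k ≤ a ∧ b' (a - k) ≤ b := by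
    intro a b
    constructor
    · intro h
      have hka := hk_min a b h
      refine ⟨hka, hb'min _ b ?_⟩
      rwa [Nat.add_sub_cancel' hka]
    · rintro ⟨hka, hb⟩
      have h1 := hb'mem (a - k)
      rw [Nat.add_sub_cancel' hka] at h1
      exact up a b h1 le_rfl hb
  have hb'strict1 : ∀ j : ℕ, 0 < b' j → b' (j + 1) < b' j := by
    intro j hj
    have h2 : monomial (ee (k + j) ((b' j - 1) + 1)) (1 : K) ∈ J := by
      rw [show b' j - 1 + 1 = b' j from by omega]
      exact hb'mem j
    have h3 := hstep (k + j) (b' j - 1) h2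
    have h4 : b' (j + 1) ≤ b' j - 1 := by
      apply hb'min
      rwa [show k + (j + 1) = k + j + 1 by omega]
    omega
  have hb'pos : ∀ j : ℕ, k + j < A → 0 < b' j := by
    intro j hj
    rcases Nat.eq_zero_or_pos (b' j) with h | h
    · exfalso
      have h1 := hb'mem j
      rw [h] at h1
      have := hA_min _ h1
      omega
    · exact h
  have hb'strict : ∀ i j : ℕ, i < j → j ≤ A - k → b' j < b' i := by
    intro i j hij hj
    induction j with
    | zero => omega
    | succ n ih =>
      have hs : b' (n + 1) < b' n := hb'strict1 n (hb'pos n (by omega))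
      rcases Nat.lt_or_ge i n with h | h
      · exact lt_trans hs (ih h (by omega))
      · have hin : i = n := by omega
        subst hin; exact hs
  have hb'A : b' (A - k) = 0 := by
    have h1 : monomial (ee (k + (A - k)) 0) (1 : K) ∈ J := by
      rw [Nat.add_sub_cancel' hkA]; exact hA
    exact Nat.le_zero.mp (hb'min _ 0 h1)
  set G : Finset (Fin 2 →₀ ℕ) :=
    (Finset.range (A - k + 1)).image (fun j => ee (k + j) (b' j)) with hGdef
  have hGcard : G.card = A - k + 1 := by
    rw [hGdef, Finset.card_image_of_injOn, Finset.card_range]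
    intro i _ j _ hij
    have h1 := congrArg (fun v : Fin 2 →₀ ℕ => v 0) hij
    simp only [ee_apply0] at h1
    omega
  have hGJ : ∀ g ∈ G, monomial g (1 : K) ∈ J := by
    intro g hg
    rw [hGdef, Finset.mem_image] at hg
    obtain ⟨j, _, rfl⟩ := hg
    exact hb'mem j
  have hmin : ∀ g ∈ G, ∀ w : Fin 2 →₀ ℕ, monomial w (1 : K) ∈ J → w ≤ g → w = g := by
    intro g hg w hw hwg
    rw [hGdef, Finset.mem_image] at hg
    obtain ⟨j, hj, rfl⟩ := hg
    rw [Finset.mem_range] at hj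
    have hw' := hw
    rw [← ee_eq w] at hw'
    obtain ⟨hkw, hbw⟩ := (hchar (w 0) (w 1)).mp hw'
    rw [← ee_eq w, ee_le_iff] at hwg
    obtain ⟨h0, h1⟩ := hwg
    rcases Nat.lt_or_ge (w 0 - k) j with hlt | hge
    · exfalso
      have := hb'strict (w 0 - k) j hlt (by omega)
      omega
    · have hw0 : w 0 = k + j := by omega
      have hj' : w 0 - k = j := by omega
      rw [hj'] at hbw
      have hw1 : w 1 = b' j := by omega
      rw [← ee_eq w, hw0, hw1]
  have hspanG : Ideal.span ((fun v => monomial v (1 : K)) '' (G : Set (Fin 2 →₀ ℕ))) = J := by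
    apply le_antisymm
    · rw [Ideal.span_le]
      rintro x ⟨v, hv, rfl⟩
      exact hGJ v hv
    · conv_lhs => rw [hJ]
      rw [Ideal.span_le]
      rintro x ⟨v, hv, rfl⟩
      have hvJ : monomial v (1 : K) ∈ J := by
        rw [hJ]; exact Ideal.subset_span ⟨v, hv, rfl⟩
      rw [← ee_eq v] at hvJ
      obtain ⟨hkv, hbv⟩ := (hchar (v 0) (v 1)).mp hvJ
      show monomial v (1 : K) ∈ Ideal.span ((fun v => monomial v (1 : K)) '' (G : Set (Fin 2 →₀ ℕ)))
      rw [monomial_mem_iff]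
      refine ⟨ee (k + min (v 0 - k) (A - k)) (b' (min (v 0 - k) (A - k))), ?_, ?_⟩
      · rw [hGdef]
        exact Finset.mem_coe.mpr (Finset.mem_image.mpr
          ⟨_, Finset.mem_range.mpr (by omega), rfl⟩)
      · have hle : ee (k + min (v 0 - k) (A - k)) (b' (min (v 0 - k) (A - k))) ≤ ee (v 0) (v 1) := by
          rw [ee_le_iff]
          constructor
          · omega
          · rcases le_or_gt (v 0 - k) (A - k) with h | h
            · rw [min_eq_left h]; exact hbv
            · rw [min_eq_right (le_of_lt h), hb'A]; exact Nat.zero_le _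
        rwa [ee_eq] at hle
  have hub := mu_le_card G hspanG
  have hlb := card_le_mu hJ G hGJ hmin
  have := le_antisymm hub hlb
  rw [this, hGcard]

end LexAux

open LexAux

/-- Corollary 4.8: if `I ⊂ K[x,y]` is a lexsegment ideal, then `μ(I²) = 2μ(I) - 1`. -/
theorem numGen_square_of_lexsegment {K : Type*} [Field K]
    (I : Ideal (MvPolynomial (Fin 2) K)) (hI : IsLexsegmentIdeal I) :
    mu (I ^ 2) = 2 * mu I - 1 := by
  classical
  obtain ⟨⟨S, hS⟩, hlex⟩ := hI
  by_cases h0 : I = ⊥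
  · have hbot : ∀ J : Ideal (MvPolynomial (Fin 2) K), J = ⊥ → mu J = 0 := by
      intro J hJ
      have h1 : (0 : ℕ) ∈ {m : ℕ | ∃ s : Finset (MvPolynomial (Fin 2) K),
          s.card = m ∧ Ideal.span (s : Set (MvPolynomial (Fin 2) K)) = J} :=
        ⟨∅, Finset.card_empty, by rw [Finset.coe_empty, Ideal.span_empty, hJ]⟩
      exact Nat.le_zero.mp (Nat.sInf_le h1)
    have h2 : I ^ 2 = ⊥ := by rw [h0, pow_two, Ideal.mul_bot]
    rw [hbot _ h2, hbot _ h0]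
  · set M : Set (Fin 2 →₀ ℕ) := {v : Fin 2 →₀ ℕ | monomial v (1 : K) ∈ I} with hMdef
    have hMI : ∀ v : Fin 2 →₀ ℕ, v ∈ M → monomial v (1 : K) ∈ I := fun v hv => hv
    have hIM : I = Ideal.span ((fun v => monomial v (1 : K)) '' M) := by
      apply le_antisymm
      · conv_lhs => rw [hS]
        rw [Ideal.span_le]
        rintro x ⟨v, hv, rfl⟩
        apply Ideal.subset_span
        refine ⟨v, ?_, rfl⟩
        show monomial v (1 : K) ∈ I
        rw [hS]
        exact Ideal.subset_span ⟨v, hv, rfl⟩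
      · rw [Ideal.span_le]
        rintro x ⟨v, hv, rfl⟩
        exact hMI v hv
    have hstepI : ∀ a b : ℕ, monomial (ee a (b + 1)) (1 : K) ∈ I →
        monomial (ee (a + 1) b) (1 : K) ∈ I := by
      intro a b h
      have h2 := hlex a (b + 1) (a + 1) b (by omega) (by omega) (by rw [monX_eq]; exact h)
      rwa [monX_eq] at h2
    have hneI : ∃ a b : ℕ, monomial (ee a b) (1 : K) ∈ I := by
      obtain ⟨f, hfI, hf0⟩ := Submodule.exists_mem_ne_zero_of_ne_bot h0
      obtain ⟨w, hw⟩ := Finset.nonempty_iff_ne_empty.mpr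
        (fun h => hf0 (MvPolynomial.support_eq_empty.mp h))
      have h2 := mem_of_support hS hfI hw
      exact ⟨w 0, w 1, by rwa [ee_eq]⟩
    have hmuI := mu_staircase hS hstepI hneI
    have hI2span : I ^ 2 = Ideal.span ((fun v => monomial v (1 : K)) '' (M + M)) := by
      rw [pow_two]
      conv_lhs => rw [hIM]
      rw [Ideal.span_mul_span']
      congr 1
      ext x
      simp only [Set.mem_mul, Set.mem_image, Set.mem_add]
      constructor
      · rintro ⟨_, ⟨u, hu, rfl⟩, _, ⟨v, hv, rfl⟩, rfl⟩
        exact ⟨u + v, ⟨u, hu, v, hv, rfl⟩, by rw [monomial_mul, one_mul]⟩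
      · rintro ⟨_, ⟨u, hu, v, hv, rfl⟩, rfl⟩
        exact ⟨monomial u 1, ⟨u, hu, rfl⟩, monomial v 1, ⟨v, hv, rfl⟩,
          by rw [monomial_mul, one_mul]⟩
    have hmem2 : ∀ a b : ℕ, monomial (ee a b) (1 : K) ∈ I ^ 2 ↔
        ∃ u ∈ M, ∃ v ∈ M, u + v ≤ ee a b := by
      intro a b
      rw [hI2span, monomial_mem_iff]
      constructor
      · rintro ⟨t, ht, hle⟩
        obtain ⟨u, hu, v, hv, rfl⟩ := Set.mem_add.mp ht
        exact ⟨u, hu, v, hv, hle⟩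
      · rintro ⟨u, hu, v, hv, hle⟩
        exact ⟨u + v, Set.mem_add.mpr ⟨u, hu, v, hv, rfl⟩, hle⟩
    have hstep2 : ∀ a b : ℕ, monomial (ee a (b + 1)) (1 : K) ∈ I ^ 2 →
        monomial (ee (a + 1) b) (1 : K) ∈ I ^ 2 := by
      intro a b h
      rw [hmem2] at h ⊢
      obtain ⟨u, hu, v, hv, huv⟩ := h
      have h0' : u 0 + v 0 ≤ a := by
        have := Finsupp.le_def.mp huv 0
        simpa [Finsupp.add_apply] using this
      have h1' : u 1 + v 1 ≤ b + 1 := by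
        have := Finsupp.le_def.mp huv 1
        simpa [Finsupp.add_apply] using this
      rcases Nat.lt_or_ge (u 1 + v 1) (b + 1) with hlt | hge
      · refine ⟨u, hu, v, hv, ?_⟩
        have h2 : ee (u 0 + v 0) (u 1 + v 1) ≤ ee (a + 1) b :=
          ee_le_iff.mpr ⟨by omega, by omega⟩
        rwa [← ee_add, ee_eq u, ee_eq v] at h2
      · rcases Nat.eq_zero_or_pos (u 1) with hu1 | hu1
        · have hvI : monomial (ee (v 0) (v 1 - 1 + 1)) (1 : K) ∈ I := by
            rw [show v 1 - 1 + 1 = v 1 from by omega, ee_eq]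
            exact hMI v hv
          have hvI' := hstepI (v 0) (v 1 - 1) hvI
          refine ⟨u, hu, ee (v 0 + 1) (v 1 - 1), hvI', ?_⟩
          have h2 : ee (u 0 + (v 0 + 1)) (u 1 + (v 1 - 1)) ≤ ee (a + 1) b :=
            ee_le_iff.mpr ⟨by omega, by omega⟩
          rwa [← ee_add, ee_eq u] at h2
        · have huI : monomial (ee (u 0) (u 1 - 1 + 1)) (1 : K) ∈ I := by
            rw [show u 1 - 1 + 1 = u 1 from by omega, ee_eq]
            exact hMI u hu
          have huI' := hstepI (u 0) (u 1 - 1) huI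
          refine ⟨ee (u 0 + 1) (u 1 - 1), huI', v, hv, ?_⟩
          have h2 : ee ((u 0 + 1) + v 0) ((u 1 - 1) + v 1) ≤ ee (a + 1) b :=
            ee_le_iff.mpr ⟨by omega, by omega⟩
          rwa [← ee_add, ee_eq v] at h2
    have hne2 : ∃ a b : ℕ, monomial (ee a b) (1 : K) ∈ I ^ 2 := by
      obtain ⟨a, b, h⟩ := hneI
      refine ⟨a + a, b + b, (hmem2 _ _).mpr ⟨ee a b, h, ee a b, h, ?_⟩⟩
      rw [ee_add]
    have hmu2 := mu_staircase hI2span hstep2 hne2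
    set A := sInf {n : ℕ | monomial (ee n 0) (1 : K) ∈ I} with hAdef
    set k := sInf {a : ℕ | ∃ b : ℕ, monomial (ee a b) (1 : K) ∈ I} with hkdef
    have hAne : {n : ℕ | monomial (ee n 0) (1 : K) ∈ I}.Nonempty := by
      obtain ⟨a, b, h⟩ := hneI
      exact ⟨a + b, slide hstepI b a h⟩
    have hA : monomial (ee A 0) (1 : K) ∈ I := by rw [hAdef]; exact Nat.sInf_mem hAne
    have hkne : {a : ℕ | ∃ b : ℕ, monomial (ee a b) (1 : K) ∈ I}.Nonempty := by
      obtain ⟨a, b, h⟩ := hneI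
      exact ⟨a, b, h⟩
    obtain ⟨bk, hbk⟩ : ∃ b, monomial (ee k b) (1 : K) ∈ I := by
      rw [hkdef]; exact Nat.sInf_mem hkne
    have hkA : k ≤ A := by rw [hkdef]; exact Nat.sInf_le ⟨0, hA⟩
    have h2A : monomial (ee (2 * A) 0) (1 : K) ∈ I ^ 2 := by
      rw [hmem2]
      refine ⟨ee A 0, hA, ee A 0, hA, ?_⟩
      rw [ee_add]
      exact ee_le_iff.mpr ⟨by omega, by omega⟩
    have h2k : ∃ b, monomial (ee (2 * k) b) (1 : K) ∈ I ^ 2 := by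
      refine ⟨bk + bk, ?_⟩
      rw [hmem2]
      refine ⟨ee k bk, hbk, ee k bk, hbk, ?_⟩
      rw [ee_add]
      exact ee_le_iff.mpr ⟨by omega, le_rfl⟩
    have hA2 : sInf {n : ℕ | monomial (ee n 0) (1 : K) ∈ I ^ 2} = 2 * A := by
      apply le_antisymm
      · exact Nat.sInf_le h2A
      · apply le_csInf ⟨2 * A, h2A⟩
        rintro n hn
        rw [Set.mem_setOf_eq, hmem2] at hn
        obtain ⟨u, hu, v, hv, hle⟩ := hn
        have h0' : u 0 + v 0 ≤ n := by
          have := Finsupp.le_def.mp hle 0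
          simpa [Finsupp.add_apply] using this
        have h1' : u 1 + v 1 ≤ 0 := by
          have := Finsupp.le_def.mp hle 1
          simpa [Finsupp.add_apply] using this
        have hAu : A ≤ u 0 := by
          rw [hAdef]
          apply Nat.sInf_le
          show monomial (ee (u 0) 0) (1 : K) ∈ I
          have h3 : monomial (ee (u 0) (u 1)) (1 : K) ∈ I := by rw [ee_eq]; exact hMI u hu
          rwa [show u 1 = 0 from by omega] at h3
        have hAv : A ≤ v 0 := by
          rw [hAdef]
          apply Nat.sInf_le
          show monomial (ee (v 0) 0) (1 : K) ∈ I
          have h3 : monomial (ee (v 0) (v 1)) (1 : K) ∈ I := by rw [ee_eq]; exact hMI v hv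
          rwa [show v 1 = 0 from by omega] at h3
        omega
    have hk2 : sInf {a : ℕ | ∃ b : ℕ, monomial (ee a b) (1 : K) ∈ I ^ 2} = 2 * k := by
      apply le_antisymm
      · exact Nat.sInf_le h2k
      · apply le_csInf ⟨2 * k, h2k⟩
        rintro n ⟨b, hn⟩
        rw [hmem2] at hn
        obtain ⟨u, hu, v, hv, hle⟩ := hn
        have h0' : u 0 + v 0 ≤ n := by
          have := Finsupp.le_def.mp hle 0
          simpa [Finsupp.add_apply] using this
        have hku : k ≤ u 0 := by
          rw [hkdef]
          exact Nat.sInf_le ⟨u 1, by rw [ee_eq]; exact hMI u hu⟩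
        have hkv : k ≤ v 0 := by
          rw [hkdef]
          exact Nat.sInf_le ⟨v 1, by rw [ee_eq]; exact hMI v hv⟩
        omega
    rw [hmu2, hA2, hk2, hmuI]
    omega
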